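/- Let B be an invertible real m×m matrix and suppose B = T·W where T and W are invertible real symmetric m×m matrices. If the inertia of T differs from the inertia of W (i.e., the number of positive eigenvalues of T, counted with multiplicity, differs from the number of positive eigenvalues of W), then B has at least one real negative eigenvalue, i.e., the characteristic polynomial of B has a root λ ∈ ℝ with λ < 0. -/

import Mathlib

open Matrix Polynomial

/-- Number of positive eigenvalues (counted with multiplicity, as roots of the
characteristic polynomial) of a real square matrix. -/
noncomputable def posEig {m : ℕ} (M : Matrix (Fin m) (Fin m) ℝ) : ℕ :=
  (M.charpoly.roots.filter (fun x : ℝ => 0 < x)).card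

section Aux
open Finset
variable {m : ℕ}

variable {m : ℕ}

lemma qf_expand (U : Matrix (Fin m) (Fin m) ℝ) (d : Fin m → ℝ) (x : Fin m → ℝ) :
    x ⬝ᵥ (U * diagonal d * Uᵀ) *ᵥ x = ∑ i, d i * ((Uᵀ *ᵥ x) i)^2 := by
  rw [← mulVec_mulVec, ← mulVec_mulVec, dotProduct_mulVec, ← mulVec_transpose]
  simp [dotProduct, mulVec_diagonal]
  ring_nf
  exact Finset.sum_congr rfl (by intros; ring)

lemma norm_pres {U : Matrix (Fin m) (Fin m) ℝ} (hU : U * Uᵀ = 1) (x : Fin m → ℝ) :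
    (Uᵀ *ᵥ x) ⬝ᵥ (Uᵀ *ᵥ x) = x ⬝ᵥ x := by
  rw [dotProduct_mulVec, ← mulVec_transpose, transpose_transpose, mulVec_mulVec, hU, one_mulVec]


variable {m : ℕ}

lemma supp_of_mem {W : Matrix (Fin m) (Fin m) ℝ} (hW : W * Wᵀ = 1) (s : Finset (Fin m))
    (y : Fin m → ℝ) (i : Fin m) (hi : i ∉ s) :
    (Wᵀ *ᵥ ((W * diagonal (fun j => if j ∈ s then (1:ℝ) else 0)) *ᵥ y)) i = 0 := by
  have hW' : Wᵀ * W = 1 := mul_eq_one_comm.mp hW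
  rw [mulVec_mulVec, ← mul_assoc, hW', one_mul, mulVec_diagonal, if_neg hi, zero_mul]

lemma rank_proj {W : Matrix (Fin m) (Fin m) ℝ} (hW : W * Wᵀ = 1) (s : Finset (Fin m)) :
    Module.finrank ℝ (LinearMap.range
      (W * diagonal (fun j => if j ∈ s then (1:ℝ) else 0)).mulVecLin) = s.card := by
  have hdet : IsUnit W.det := by
    have := congrArg Matrix.det hW
    rw [det_mul, det_one] at this
    exact IsUnit.of_mul_eq_one _ this
  have h1 : Module.finrank ℝ (LinearMap.range
      (W * diagonal (fun j => if j ∈ s then (1:ℝ) else 0)).mulVecLin)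
      = (W * diagonal (fun j => if j ∈ s then (1:ℝ) else 0)).rank := rfl
  rw [h1, rank_mul_eq_right_of_isUnit_det _ _ hdet, rank_diagonal]
  rw [Fintype.card_subtype]
  congr 1
  apply Finset.ext
  intro i
  by_cases h : i ∈ s <;> simp [h]

lemma LB_core (U V : Matrix (Fin m) (Fin m) ℝ) (hU : U * Uᵀ = 1) (hV : V * Vᵀ = 1)
    (d e : Fin m → ℝ) (f : (Fin m → ℝ) → ℝ)
    (hf : ∀ x, f x = ∑ i, e i * ((Vᵀ *ᵥ x) i)^2)
    (h : ∀ x : Fin m → ℝ, x ≠ 0 → (∀ i, ¬ (0 < d i) → (Uᵀ *ᵥ x) i = 0) → 0 < f x) :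
    (univ.filter (fun i => 0 < d i)).card ≤ (univ.filter (fun i => 0 < e i)).card := by
  classical
  by_contra hlt
  push_neg at hlt
  set P := univ.filter (fun i => 0 < d i) with hP
  set Q := univ.filter (fun i => ¬ 0 < e i) with hQ
  set V₁ := LinearMap.range (U * diagonal (fun j => if j ∈ P then (1:ℝ) else 0)).mulVecLin
  set V₂ := LinearMap.range (V * diagonal (fun j => if j ∈ Q then (1:ℝ) else 0)).mulVecLin
  have hr1 : Module.finrank ℝ V₁ = P.card := rank_proj hU P
  have hr2 : Module.finrank ℝ V₂ = Q.card := rank_proj hV Q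
  have hQcard : (univ.filter (fun i => 0 < e i)).card + Q.card = m := by
    rw [hQ]
    rw [Finset.card_filter_add_card_filter_not]
    simp
  have hsup : Module.finrank ℝ ↥(V₁ ⊔ V₂) ≤ m := by
    simpa using Submodule.finrank_le (V₁ ⊔ V₂)
  have hinf : 0 < Module.finrank ℝ ↥(V₁ ⊓ V₂) := by
    have := Submodule.finrank_sup_add_finrank_inf_eq V₁ V₂
    omega
  obtain ⟨⟨x, hx⟩, hxne⟩ := Module.finrank_pos_iff_exists_ne_zero.mp hinf
  have hx0 : x ≠ 0 := by
    intro hh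
    apply hxne
    ext
    simp [hh]
  obtain ⟨hx1, hx2⟩ := Submodule.mem_inf.mp hx
  obtain ⟨y, hy⟩ := hx1
  obtain ⟨z, hz⟩ := hx2
  rw [Matrix.mulVecLin_apply] at hy hz
  have hpos : 0 < f x := by
    apply h x hx0
    intro i hi
    have : i ∉ P := by simp [hP, hi]
    rw [← hy]
    exact supp_of_mem hU P y i this
  have hnonpos : f x ≤ 0 := by
    rw [hf]
    apply Finset.sum_nonpos
    intro i _
    by_cases hei : 0 < e i
    · have : i ∉ Q := by simp [hQ, hei]
      rw [← hz, supp_of_mem hV Q z i this]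
      simp
    · push_neg at hei
      exact mul_nonpos_of_nonpos_of_nonneg hei (sq_nonneg _)
  linarith


variable {m : ℕ}

lemma dot_self_pos {x : Fin m → ℝ} (hx : x ≠ 0) : 0 < x ⬝ᵥ x := by
  have h0 : 0 ≤ x ⬝ᵥ x := Finset.sum_nonneg fun i _ => mul_self_nonneg _
  rcases h0.lt_or_eq with h | h
  · exact h
  · exact absurd (dotProduct_self_eq_zero.mp h.symm) hx

lemma qbound (C : Matrix (Fin m) (Fin m) ℝ) (x : Fin m → ℝ) :
    |x ⬝ᵥ C *ᵥ x| ≤ (∑ i, ∑ j, |C i j|) * (x ⬝ᵥ x) := by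
  have hs : 0 ≤ x ⬝ᵥ x := Finset.sum_nonneg fun i _ => mul_self_nonneg _
  have hb : ∀ i j : Fin m, |x i * x j| ≤ x ⬝ᵥ x := by
    intro i j
    have h1 : x i * x i ≤ x ⬝ᵥ x :=
      Finset.single_le_sum (f := fun k => x k * x k) (fun k _ => mul_self_nonneg _) (mem_univ i)
    have h2 : x j * x j ≤ x ⬝ᵥ x :=
      Finset.single_le_sum (f := fun k => x k * x k) (fun k _ => mul_self_nonneg _) (mem_univ j)
    rw [abs_mul]
    nlinarith [sq_nonneg (|x i| - |x j|), sq_abs (x i), sq_abs (x j), abs_nonneg (x i),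
      abs_nonneg (x j)]
  have hexp : x ⬝ᵥ C *ᵥ x = ∑ i, ∑ j, x i * (C i j * x j) := by
    simp [dotProduct, Matrix.mulVec, Finset.mul_sum]
  rw [hexp]
  calc |∑ i, ∑ j, x i * (C i j * x j)| ≤ ∑ i, |∑ j, x i * (C i j * x j)| :=
        Finset.abs_sum_le_sum_abs _ _
    _ ≤ ∑ i, ∑ j, |x i * (C i j * x j)| :=
        Finset.sum_le_sum fun i _ => Finset.abs_sum_le_sum_abs _ _
    _ ≤ ∑ i, ∑ j, |C i j| * (x ⬝ᵥ x) := by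
        refine Finset.sum_le_sum fun i _ => Finset.sum_le_sum fun j _ => ?_
        have : |x i * (C i j * x j)| = |C i j| * |x i * x j| := by
          rw [← abs_mul]; ring_nf
        rw [this]
        exact mul_le_mul_of_nonneg_left (hb i j) (abs_nonneg _)
    _ = (∑ i, ∑ j, |C i j|) * (x ⬝ᵥ x) := by rw [Finset.sum_mul]; simp [Finset.sum_mul]

lemma det_pack {U S : Matrix (Fin m) (Fin m) ℝ} {g : Fin m → ℝ} (hU : U * Uᵀ = 1)
    (hS : S = U * diagonal g * Uᵀ) : S.det = ∏ i, g i := by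
  have : U.det * Uᵀ.det = 1 := by rw [← det_mul, hU, det_one]
  rw [hS, det_mul, det_mul, det_diagonal]
  linear_combination (∏ i, g i) * this

lemma charpoly_eval (M : Matrix (Fin m) (Fin m) ℝ) (u : ℝ) :
    M.charpoly.eval u = (u • (1 : Matrix (Fin m) (Fin m) ℝ) - M).det := by
  rw [Matrix.charpoly]
  show (evalRingHom u) (charmatrix M).det = _
  rw [RingHom.map_det]
  congr 1
  ext i j
  rcases eq_or_ne i j with rfl | h
  · simp [charmatrix_apply_eq, Matrix.one_apply]
  · simp [charmatrix_apply_ne _ _ _ h, Matrix.one_apply_ne h, h]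


variable {m : ℕ}

lemma charpoly_diag_conj {U : Matrix (Fin m) (Fin m) ℝ} (hU : U * Uᵀ = 1)
    (d : Fin m → ℝ) : (U * diagonal d * Uᵀ).charpoly = ∏ i, (X - C (d i)) := by
  have hU' : Uᵀ * U = 1 := mul_eq_one_comm.mp hU
  have key : charmatrix (U * diagonal d * Uᵀ)
      = (C : ℝ →+* ℝ[X]).mapMatrix U * charmatrix (diagonal d) * (C : ℝ →+* ℝ[X]).mapMatrix Uᵀ := by
    unfold charmatrix
    rw [mul_sub, sub_mul]
    congr 1
    · have h1 : (C : ℝ →+* ℝ[X]).mapMatrix U * Matrix.scalar (Fin m) (X : ℝ[X])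
          = Matrix.scalar (Fin m) (X : ℝ[X]) * (C : ℝ →+* ℝ[X]).mapMatrix U :=
        (scalar_commute (X : ℝ[X]) (fun r => Commute.all _ _) _).symm
      rw [h1, mul_assoc, ← RingHom.map_mul, hU]
      simp
    · rw [← RingHom.map_mul, ← RingHom.map_mul]
  have hdiag : charmatrix (diagonal d) = diagonal fun i => (X : ℝ[X]) - C (d i) := by
    ext i j
    rcases eq_or_ne i j with rfl | h
    · simp
    · simp [h, charmatrix_apply_ne _ _ _ h, diagonal_apply_ne _ h]
  rw [Matrix.charpoly, key, det_mul, det_mul, mul_comm, ← mul_assoc, ← det_mul,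
    ← RingHom.map_mul, hU']
  simp [hdiag, det_diagonal]



variable {m : ℕ}

lemma posEig_of {M : Matrix (Fin m) (Fin m) ℝ} {d : Fin m → ℝ}
    (h : M.charpoly = ∏ i, (X - C (d i))) :
    posEig M = (univ.filter (fun i => 0 < d i)).card := by
  classical
  have h2 : M.charpoly = ((univ.val.map d).map (fun a => X - C a)).prod := by
    rw [h, Finset.prod, Multiset.map_map]
    rfl
  rw [posEig, h2, Polynomial.roots_multiset_prod_X_sub_C, Multiset.filter_map,
    Multiset.card_map]
  rfl


variable {m : ℕ}

lemma exists_spectral (M : Matrix (Fin m) (Fin m) ℝ) (hM : M.IsSymm) :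
    ∃ (U : Matrix (Fin m) (Fin m) ℝ) (g : Fin m → ℝ), U * Uᵀ = 1 ∧ M = U * diagonal g * Uᵀ := by
  have hHerm : M.IsHermitian := by
    rw [Matrix.IsHermitian, conjTranspose_eq_transpose_of_trivial]
    exact hM
  refine ⟨(Matrix.IsHermitian.eigenvectorUnitary hHerm : Matrix (Fin m) (Fin m) ℝ),
    hHerm.eigenvalues, ?_, ?_⟩
  · have := (Matrix.mem_unitaryGroup_iff).mp (Matrix.IsHermitian.eigenvectorUnitary hHerm).2
    rwa [star_eq_conjTranspose, conjTranspose_eq_transpose_of_trivial] at this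
  · have := hHerm.spectral_theorem
    rwa [Unitary.conjStarAlgAut_apply, star_eq_conjTranspose, conjTranspose_eq_transpose_of_trivial,
      show RCLike.ofReal ∘ hHerm.eigenvalues = hHerm.eigenvalues from funext (by simp)] at this

lemma count_le_perturb {S C U U' : Matrix (Fin m) (Fin m) ℝ} {g g' : Fin m → ℝ} {c : ℝ}
    (hU : U * Uᵀ = 1) (hU' : U' * U'ᵀ = 1)
    (hS : S = U * diagonal g * Uᵀ) (hS' : S + C = U' * diagonal g' * U'ᵀ)
    (hc0 : 0 < c) (hc : ∀ i, 0 < g i → 2*c < g i)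
    (hsmall : ∀ x : Fin m → ℝ, |x ⬝ᵥ C *ᵥ x| ≤ c * (x ⬝ᵥ x)) :
    (univ.filter (fun i => 0 < g i)).card ≤ (univ.filter (fun i => 0 < g' i)).card := by
  apply LB_core U U' hU hU' g g' (fun x => x ⬝ᵥ (S + C) *ᵥ x)
  · intro x
    rw [hS', qf_expand]
  · intro x hx0 hsupp
    have hq : x ⬝ᵥ S *ᵥ x = ∑ i, g i * ((Uᵀ *ᵥ x) i)^2 := by rw [hS, qf_expand]
    have hxx : 0 < x ⬝ᵥ x := dot_self_pos hx0
    have hyy : ∑ i, ((Uᵀ *ᵥ x) i)^2 = x ⬝ᵥ x := by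
      rw [← norm_pres hU x]
      simp [dotProduct, sq]
    have h1 : 2*c * (x ⬝ᵥ x) ≤ x ⬝ᵥ S *ᵥ x := by
      rw [hq, ← hyy, Finset.mul_sum]
      refine Finset.sum_le_sum fun i _ => ?_
      by_cases hgi : 0 < g i
      · exact mul_le_mul_of_nonneg_right (hc i hgi).le (sq_nonneg _)
      · rw [hsupp i hgi]
        simp
    have hexpand : x ⬝ᵥ (S + C) *ᵥ x = x ⬝ᵥ S *ᵥ x + x ⬝ᵥ C *ᵥ x := by
      rw [add_mulVec, dotProduct_add]
    have h2 := (abs_le.mp (hsmall x)).1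
    show 0 < x ⬝ᵥ (S + C) *ᵥ x
    rw [hexpand]
    nlinarith
lemma count_split {g : Fin m → ℝ} (hg : ∀ i, g i ≠ 0) :
    (univ.filter fun i => 0 < g i).card + (univ.filter fun i => g i < 0).card = m := by
  classical
  have heq : (univ.filter fun i => ¬ 0 < g i) = univ.filter fun i => g i < 0 := by
    apply Finset.filter_congr
    intro i _
    rw [not_lt]
    exact ⟨fun h => h.lt_of_ne (hg i), le_of_lt⟩
  have := Finset.card_filter_add_card_filter_not (s := (univ : Finset (Fin m)))
    (p := fun i => 0 < g i)
  rw [heq] at this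
  simpa using this

lemma isSymm_add {A B : Matrix (Fin m) (Fin m) ℝ} (hA : A.IsSymm) (hB : B.IsSymm) :
    (A + B).IsSymm := by
  unfold Matrix.IsSymm at *
  rw [transpose_add, hA, hB]

lemma isSymm_smul {A : Matrix (Fin m) (Fin m) ℝ} (hA : A.IsSymm) (t : ℝ) :
    (t • A).IsSymm := by
  unfold Matrix.IsSymm at *
  rw [transpose_smul, hA]

lemma local_step (A Cm : Matrix (Fin m) (Fin m) ℝ) (hA : A.IsSymm) (hCm : Cm.IsSymm)
    (t : ℝ) (hdt : IsUnit ((A + t • Cm).det)) :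
    ∃ ε > 0, ∀ t' : ℝ, IsUnit ((A + t' • Cm).det) → |t' - t| < ε →
      posEig (A + t' • Cm) = posEig (A + t • Cm) := by
  classical
  have hSt : (A + t • Cm).IsSymm := isSymm_add hA (isSymm_smul hCm t)
  obtain ⟨U, g, hU, hSdec⟩ := exists_spectral _ hSt
  have hprod : (∏ i, g i) ≠ 0 := by
    rw [← det_pack hU hSdec]
    exact hdt.ne_zero
  have hgne : ∀ i, g i ≠ 0 := fun i =>
    Finset.prod_ne_zero_iff.mp hprod i (mem_univ i)
  rcases isEmpty_or_nonempty (Fin m) with hm | hm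
  · refine ⟨1, one_pos, fun t' hdt' _ => ?_⟩
    have hSt' : (A + t' • Cm).IsSymm := isSymm_add hA (isSymm_smul hCm t')
    obtain ⟨U', g', hU', hSdec'⟩ := exists_spectral _ hSt'
    rw [posEig_of (by rw [hSdec']; exact charpoly_diag_conj hU' g'),
      posEig_of (by rw [hSdec]; exact charpoly_diag_conj hU g)]
    simp [Finset.univ_eq_empty]
  · set δ := (univ.image fun i => |g i|).min' ((univ_nonempty).image _) with hδ
    have hδpos : 0 < δ := by
      obtain ⟨i, _, hi⟩ := Finset.mem_image.mp
        (Finset.min'_mem (univ.image fun i => |g i|) ((univ_nonempty).image _))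
      rw [hδ, ← hi]
      exact abs_pos.mpr (hgne i)
    have hδle : ∀ i, δ ≤ |g i| := fun i =>
      Finset.min'_le _ _ (Finset.mem_image_of_mem _ (mem_univ i))
    set K := ∑ i, ∑ j, |Cm i j| with hK
    have hK0 : 0 ≤ K := Finset.sum_nonneg fun i _ => Finset.sum_nonneg fun j _ => abs_nonneg _
    refine ⟨δ/(3*(K+1)), by positivity, fun t' hdt' hnear => ?_⟩
    have hSt' : (A + t' • Cm).IsSymm := isSymm_add hA (isSymm_smul hCm t')
    obtain ⟨U', g', hU', hSdec'⟩ := exists_spectral _ hSt'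
    have hg'ne : ∀ i, g' i ≠ 0 := fun i =>
      Finset.prod_ne_zero_iff.mp (by rw [← det_pack hU' hSdec']; exact hdt'.ne_zero) i (mem_univ i)
    have hsplit : A + t' • Cm = (A + t • Cm) + (t' - t) • Cm := by
      rw [sub_smul]; abel
    set c := δ/3 with hc
    have hc0 : 0 < c := by positivity
    have hsmall : ∀ x : Fin m → ℝ, |x ⬝ᵥ ((t' - t) • Cm) *ᵥ x| ≤ c * (x ⬝ᵥ x) := by
      intro x
      have hxx0 : 0 ≤ x ⬝ᵥ x := Finset.sum_nonneg fun i _ => mul_self_nonneg _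
      rw [smul_mulVec, dotProduct_smul, smul_eq_mul, abs_mul]
      have h1 : |t' - t| * |x ⬝ᵥ Cm *ᵥ x| ≤ |t' - t| * (K * (x ⬝ᵥ x)) :=
        mul_le_mul_of_nonneg_left (qbound Cm x) (abs_nonneg _)
      have h2 : |t' - t| * (K * (x ⬝ᵥ x)) ≤ (δ/(3*(K+1))) * (K * (x ⬝ᵥ x)) :=
        mul_le_mul_of_nonneg_right hnear.le (mul_nonneg hK0 hxx0)
      have hεK : (δ/(3*(K+1))) * K ≤ c := by
        rw [hc, div_mul_eq_mul_div, div_le_div_iff₀ (by positivity) (by positivity)]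
        nlinarith
      have h3 : (δ/(3*(K+1))) * (K * (x ⬝ᵥ x)) ≤ c * (x ⬝ᵥ x) := by
        rw [← mul_assoc]
        exact mul_le_mul_of_nonneg_right hεK hxx0
      linarith
    have hposle : (univ.filter fun i => 0 < g i).card ≤ (univ.filter fun i => 0 < g' i).card := by
      refine count_le_perturb hU hU' hSdec ?_ hc0 ?_ hsmall
      · rw [← hsplit]; exact hSdec'
      · intro i hgi
        have := hδle i
        rw [abs_of_pos hgi] at this
        rw [hc]; linarith
    have hnegle : (univ.filter fun i => g i < 0).card ≤ (univ.filter fun i => g' i < 0).card := by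
      have key : (univ.filter fun i => 0 < (fun j => -g j) i).card
          ≤ (univ.filter fun i => 0 < (fun j => -g' j) i).card := by
        refine count_le_perturb (S := -(A + t • Cm)) (C := -((t' - t) • Cm))
          (g := fun j => -g j) (g' := fun j => -g' j) hU hU' ?_ ?_ hc0 ?_ ?_
        · rw [hSdec, ← diagonal_neg, Matrix.mul_neg, Matrix.neg_mul]
        · rw [show -(A + t • Cm) + -((t' - t) • Cm) = -(A + t' • Cm) by rw [hsplit]; abel, hSdec',
            ← diagonal_neg, Matrix.mul_neg, Matrix.neg_mul]
        · intro i hgi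
          simp only [neg_pos] at hgi
          have := hδle i
          rw [abs_of_neg hgi] at this
          simp only [hc]
          linarith
        · intro x
          rw [neg_mulVec, dotProduct_neg, abs_neg]
          exact hsmall x
      calc (univ.filter fun i => g i < 0).card
          = (univ.filter fun i => 0 < (fun j => -g j) i).card := by
            congr 1; apply Finset.filter_congr; intro i _; simp [neg_pos]
        _ ≤ (univ.filter fun i => 0 < (fun j => -g' j) i).card := key
        _ = (univ.filter fun i => g' i < 0).card := by
            congr 1; apply Finset.filter_congr; intro i _; simp [neg_pos]
    have hm1 := count_split hgne
    have hm2 := count_split hg'ne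
    rw [posEig_of (by rw [hSdec']; exact charpoly_diag_conj hU' g'),
      posEig_of (by rw [hSdec]; exact charpoly_diag_conj hU g)]
    omega
lemma posEig_const (A Cm : Matrix (Fin m) (Fin m) ℝ) (hA : A.IsSymm) (hCm : Cm.IsSymm)
    (hdet : ∀ t ∈ Set.Icc (0:ℝ) 1, IsUnit ((A + t • Cm).det)) :
    posEig (A + (0:ℝ) • Cm) = posEig (A + (1:ℝ) • Cm) := by
  haveI : PreconnectedSpace (Set.Icc (0:ℝ) 1) := Subtype.preconnectedSpace isPreconnected_Icc
  set F : Set.Icc (0:ℝ) 1 → ℕ := fun u => posEig (A + u.1 • Cm) with hF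
  have hlc : IsLocallyConstant F := by
    rw [IsLocallyConstant.iff_eventually_eq]
    intro u
    obtain ⟨ε, hε, hstep⟩ := local_step A Cm hA hCm u.1 (hdet u.1 u.2)
    have hev : ∀ᶠ v : Set.Icc (0:ℝ) 1 in nhds u, |v.1 - u.1| < ε :=
      (continuous_subtype_val.tendsto u).eventually (eventually_abs_sub_lt u.1 hε)
    exact hev.mono fun v hv => hstep v.1 (hdet v.1 v.2) hv
  exact hlc.apply_eq_of_preconnectedSpace ⟨0, by norm_num⟩ ⟨1, by norm_num⟩
end Aux

open Finset in
theorem stmt_0 {m : ℕ} (B T W : Matrix (Fin m) (Fin m) ℝ)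
    (hB : IsUnit B.det) (hT : T.IsSymm) (hW : W.IsSymm)
    (hTinv : IsUnit T.det) (hWinv : IsUnit W.det)
    (hBTW : B = T * W)
    (hinertia : posEig T ≠ posEig W) :
    ∃ lam : ℝ, lam < 0 ∧ B.charpoly.IsRoot lam := by
  classical
  by_contra hcon
  push_neg at hcon
  apply hinertia
  have hBev : ∀ u : ℝ, u ≤ 0 → B.charpoly.eval u ≠ 0 := by
    intro u hu
    rcases hu.lt_or_eq with h | h
    · exact hcon u h
    · subst h
      rw [charpoly_eval]
      rw [zero_smul, zero_sub, det_neg]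
      exact mul_ne_zero (pow_ne_zero _ (by norm_num)) hB.ne_zero
  have hWinv_symm : (W⁻¹).IsSymm := by
    unfold Matrix.IsSymm at *
    rw [transpose_nonsing_inv, hW]
  have hTW : T = B * W⁻¹ := by
    rw [hBTW, Matrix.mul_assoc, mul_nonsing_inv _ hWinv, Matrix.mul_one]
  have hdet : ∀ t ∈ Set.Icc (0:ℝ) 1, IsUnit ((W⁻¹ + t • (T - W⁻¹)).det) := by
    intro t ht
    have hident : W⁻¹ + t • (T - W⁻¹) = ((1 - t) • (1 : Matrix (Fin m) (Fin m) ℝ) + t • B) * W⁻¹ := by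
      rw [Matrix.add_mul, Matrix.smul_mul, Matrix.smul_mul, Matrix.one_mul, ← hTW, smul_sub,
        sub_smul, one_smul]
      abel
    rw [hident, det_mul]
    refine IsUnit.mul ?_ (isUnit_nonsing_inv_det _ hWinv)
    rw [isUnit_iff_ne_zero]
    rcases eq_or_lt_of_le ht.1 with h0 | h0t
    · rw [← h0]
      simp
    · have hkey : (1 - t) • (1 : Matrix (Fin m) (Fin m) ℝ) + t • B
          = (-t) • ((-((1-t)/t)) • (1 : Matrix (Fin m) (Fin m) ℝ) - B) := by
        have hc : (-t) * (-((1-t)/t)) = 1 - t := by field_simp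
        rw [smul_sub, smul_smul, hc, neg_smul, sub_neg_eq_add]
      rw [hkey, det_smul]
      apply mul_ne_zero
      · exact pow_ne_zero _ (neg_ne_zero.mpr h0t.ne')
      · rw [← charpoly_eval]
        exact hBev _ (neg_nonpos.mpr (div_nonneg (by linarith [ht.2]) h0t.le))
  have hchain : posEig (W⁻¹ + (0:ℝ) • (T - W⁻¹)) = posEig (W⁻¹ + (1:ℝ) • (T - W⁻¹)) := by
    refine posEig_const _ _ hWinv_symm ?_ hdet
    unfold Matrix.IsSymm at *
    rw [transpose_sub, hT, hWinv_symm]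
  rw [zero_smul, add_zero, one_smul, add_sub_cancel] at hchain
  -- posEig W⁻¹ = posEig W
  obtain ⟨U, g, hU, hWdec⟩ := exists_spectral W hW
  have hU' : Uᵀ * U = 1 := mul_eq_one_comm.mp hU
  have hgne : ∀ i, g i ≠ 0 := fun i =>
    Finset.prod_ne_zero_iff.mp (by rw [← det_pack hU hWdec]; exact hWinv.ne_zero) i (mem_univ i)
  have hWinvdec : W⁻¹ = U * diagonal (fun i => (g i)⁻¹) * Uᵀ := by
    apply Matrix.inv_eq_right_inv
    rw [hWdec]
    simp only [Matrix.mul_assoc]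
    rw [← Matrix.mul_assoc Uᵀ U, hU', Matrix.one_mul,
      ← Matrix.mul_assoc (diagonal g), diagonal_mul_diagonal]
    rw [show (fun i => g i * (g i)⁻¹) = fun _ => (1:ℝ) from funext fun i => mul_inv_cancel₀ (hgne i)]
    rw [diagonal_one, Matrix.one_mul, hU]
  have e1 : posEig W⁻¹ = (univ.filter fun i => 0 < (g i)⁻¹).card :=
    posEig_of (by rw [hWinvdec]; exact charpoly_diag_conj hU _)
  have e2 : posEig W = (univ.filter fun i => 0 < g i).card :=
    posEig_of (by rw [hWdec]; exact charpoly_diag_conj hU _)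
  have e3 : (univ.filter fun i => 0 < (g i)⁻¹).card = (univ.filter fun i => 0 < g i).card := by
    congr 1
    apply Finset.filter_congr
    intro i _
    simp [inv_pos]
  rw [← hchain, e1, e3, ← e2]
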